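/- There is an absolute constant c such that for every η > 0 there exists K ≤ twr(⌈η^{−c}⌉) such that every finite 3-uniform hypergraph H admits a weakly η-quasirandom partition of V(H) into at most K parts. -/

import Mathlib

open scoped Classical

def twr : ℕ → ℕ → ℕ
  | 0, x => x
  | n + 1, x => 2 ^ twr n x

def tower (n : ℕ) : ℕ := twr n 1

variable {V : Type}

noncomputable def bipDensity [DecidableEq V] (Z : Finset (V × V)) (X Y : Finset V) : ℝ :=
  ((Z ∩ X ×ˢ Y).card : ℝ) / ((X.card : ℝ) * (Y.card : ℝ))

def funcQuasi (X Y : Finset V) (f : V → V → ℝ) (α : ℝ) : Prop :=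
  ∑ x ∈ X, ∑ x' ∈ X, ∑ y ∈ Y, ∑ y' ∈ Y, f x y * f x' y * f x y' * f x' y'
    ≤ α * (X.card : ℝ) ^ 2 * (Y.card : ℝ) ^ 2

def bipQuasi [DecidableEq V] (Z : Finset (V × V)) (X Y : Finset V) (α : ℝ) : Prop :=
  funcQuasi X Y (fun x y => (if (x, y) ∈ Z then (1 : ℝ) else 0) - bipDensity Z X Y) α

def triangles [DecidableEq V] (Z12 Z13 Z23 : Finset (V × V)) (Y1 Y2 Y3 : Finset V) :
    Finset (V × V × V) :=
  (Y1 ×ˢ Y2 ×ˢ Y3).filter fun p =>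
    (p.1, p.2.1) ∈ Z12 ∧ (p.1, p.2.2) ∈ Z13 ∧ (p.2.1, p.2.2) ∈ Z23

noncomputable def relDensity [DecidableEq V] (H : V → V → V → Prop)
    (Z12 Z13 Z23 : Finset (V × V)) (Y1 Y2 Y3 : Finset V) : ℝ :=
  (((triangles Z12 Z13 Z23 Y1 Y2 Y3).filter fun p => H p.1 p.2.1 p.2.2).card : ℝ) /
    ((triangles Z12 Z13 Z23 Y1 Y2 Y3).card : ℝ)

noncomputable def chainFn [DecidableEq V] (H : V → V → V → Prop)
    (Z12 Z13 Z23 : Finset (V × V)) (Y1 Y2 Y3 : Finset V) (x y z : V) : ℝ :=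
  if (x, y, z) ∈ triangles Z12 Z13 Z23 Y1 Y2 Y3 then
    (if H x y z then (1 : ℝ) else 0) - relDensity H Z12 Z13 Z23 Y1 Y2 Y3
  else 0

def hQuasi [DecidableEq V] (H : V → V → V → Prop) (Z12 Z13 Z23 : Finset (V × V))
    (Y1 Y2 Y3 : Finset V) (η : ℝ) : Prop :=
  ∑ x ∈ Y1, ∑ x' ∈ Y1, ∑ y ∈ Y2, ∑ y' ∈ Y2, ∑ z ∈ Y3, ∑ z' ∈ Y3,
      chainFn H Z12 Z13 Z23 Y1 Y2 Y3 x y z * chainFn H Z12 Z13 Z23 Y1 Y2 Y3 x y z' *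
        chainFn H Z12 Z13 Z23 Y1 Y2 Y3 x y' z * chainFn H Z12 Z13 Z23 Y1 Y2 Y3 x y' z' *
        chainFn H Z12 Z13 Z23 Y1 Y2 Y3 x' y z * chainFn H Z12 Z13 Z23 Y1 Y2 Y3 x' y z' *
        chainFn H Z12 Z13 Z23 Y1 Y2 Y3 x' y' z * chainFn H Z12 Z13 Z23 Y1 Y2 Y3 x' y' z'
    ≤ η * (bipDensity Z12 Y1 Y2 * bipDensity Z13 Y1 Y3 * bipDensity Z23 Y2 Y3) ^ 4 *
        (Y1.card : ℝ) ^ 2 * (Y2.card : ℝ) ^ 2 * (Y3.card : ℝ) ^ 2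

noncomputable def triProdDensity [DecidableEq V] (Z12 Z13 Z23 : Finset (V × V))
    (Y1 Y2 Y3 : Finset V) : ℝ :=
  bipDensity Z12 Y1 Y2 * bipDensity Z13 Y1 Y3 * bipDensity Z23 Y2 Y3

def triGraphQuasi [DecidableEq V] (Z12 Z13 Z23 : Finset (V × V)) (Y1 Y2 Y3 : Finset V)
    (α : ℝ) : Prop :=
  bipQuasi Z12 Y1 Y2 α ∧ bipQuasi Z13 Y1 Y3 α ∧ bipQuasi Z23 Y2 Y3 α

def triChainQuasi [DecidableEq V] (H : V → V → V → Prop) (Z12 Z13 Z23 : Finset (V × V))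
    (Y1 Y2 Y3 : Finset V) (η : ℝ) (ψ : ℝ → ℝ) : Prop :=
  hQuasi H Z12 Z13 Z23 Y1 Y2 Y3 η ∧
    triGraphQuasi Z12 Z13 Z23 Y1 Y2 Y3 (ψ (triProdDensity Z12 Z13 Z23 Y1 Y2 Y3))

def IsPolyFn (ψ : ℝ → ℝ) : Prop :=
  ∃ c : ℝ, ∃ k : ℕ, 0 < c ∧ 1 ≤ k ∧ ∀ x : ℝ, ψ x = c * x ^ k

def IsVertexPartition (P : Finset (Finset V)) (S : Finset V) : Prop :=
  (∀ Y ∈ P, Y ⊆ S) ∧ ∀ x ∈ S, ∃! Y, Y ∈ P ∧ x ∈ Y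

def IsSubPartition [DecidableEq V] (P : Finset (Finset (V × V))) (E : Finset (V × V)) : Prop :=
  (∀ Z ∈ P, Z ⊆ E) ∧ ∀ e ∈ E, ∃! Z, Z ∈ P ∧ e ∈ Z

def IsBipPartition [DecidableEq V] (P : Finset (Finset (V × V))) (X Y : Finset V) : Prop :=
  IsSubPartition P (X ×ˢ Y)

def Is3Graph (H : Finset (Finset V)) : Prop := ∀ e ∈ H, e.card = 3

def hPred [DecidableEq V] (H : Finset (Finset V)) (x y z : V) : Prop :=
  ({x, y, z} : Finset V) ∈ H

def HasShattered [DecidableEq V] (H : Finset (Finset V)) (d : ℕ) : Prop :=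
  ∃ A B : Finset V, Disjoint A B ∧ A.card = d ∧ B.card = d ∧
    ∀ S ⊆ A ×ˢ B, ∃ v : V, ∀ a ∈ A, ∀ b ∈ B, (({a, b, v} : Finset V) ∈ H ↔ (a, b) ∈ S)

def VC2dimLE [DecidableEq V] (H : Finset (Finset V)) (d : ℕ) : Prop := ¬ HasShattered H (d + 1)

def IsChainPartition [Fintype V] [DecidableEq V] (QV : Finset (Finset V))
    (QE : Finset V → Finset V → Finset (Finset (V × V))) : Prop :=
  IsVertexPartition QV Finset.univ ∧
    ∀ Y ∈ QV, ∀ Y' ∈ QV, Y ≠ Y' → IsBipPartition (QE Y Y') Y Y'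

def IsCylPartition {t : ℕ} [DecidableEq V] (PV : Finset (Fin t → Finset V))
    (X : Fin t → Finset V) : Prop :=
  (∀ Y ∈ PV, ∀ i, Y i ⊆ X i) ∧
    ∀ x ∈ Fintype.piFinset X, ∃! Y, Y ∈ PV ∧ ∀ i, x i ∈ Y i

def tGraphQuasi {t : ℕ} [DecidableEq V] (Z : Fin t → Fin t → Finset (V × V))
    (Y : Fin t → Finset V) (α : ℝ) : Prop :=
  ∀ i j : Fin t, i < j → bipQuasi (Z i j) (Y i) (Y j) α

noncomputable def prodDensity {t : ℕ} [DecidableEq V] (Z : Fin t → Fin t → Finset (V × V))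
    (Y : Fin t → Finset V) : ℝ :=
  ∏ p ∈ Finset.univ.filter (fun p : Fin t × Fin t => p.1 < p.2),
    bipDensity (Z p.1 p.2) (Y p.1) (Y p.2)

def tChainQuasi {t : ℕ} [DecidableEq V] (H : V → V → V → Prop)
    (Z : Fin t → Fin t → Finset (V × V)) (Y : Fin t → Finset V) (η : ℝ) (ψ : ℝ → ℝ) : Prop :=
  (∀ i j k : Fin t, i < j → j < k →
      hQuasi H (Z i j) (Z i k) (Z j k) (Y i) (Y j) (Y k) η) ∧
    tGraphQuasi Z Y (ψ (prodDensity Z Y))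


noncomputable def eH {V : Type} [DecidableEq V] (H : Finset (Finset V))
    (X1 X2 X3 : Finset V) : ℝ :=
  (((X1 ×ˢ X2 ×ˢ X3).filter fun p => ({p.1, p.2.1, p.2.2} : Finset V) ∈ H).card : ℝ)

noncomputable def dH {V : Type} [DecidableEq V] (H : Finset (Finset V))
    (X1 X2 X3 : Finset V) : ℝ :=
  eH H X1 X2 X3 / ((X1.card : ℝ) * (X2.card : ℝ) * (X3.card : ℝ))

def weakQuasi {V : Type} [DecidableEq V] (H : Finset (Finset V)) (X1 X2 X3 : Finset V)
    (η : ℝ) : Prop :=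
  ∀ X1' ⊆ X1, ∀ X2' ⊆ X2, ∀ X3' ⊆ X3,
    |eH H X1' X2' X3' -
        dH H X1 X2 X3 * (X1'.card : ℝ) * (X2'.card : ℝ) * (X3'.card : ℝ)| ≤
      η * (X1.card : ℝ) * (X2.card : ℝ) * (X3.card : ℝ)

namespace CWR
open Finset
set_option linter.unusedSectionVars false

variable {V : Type} [DecidableEq V]

noncomputable def wcd (Y1 Y2 Y3 : Finset V) : ℝ :=
  (Y1.card : ℝ) * (Y2.card : ℝ) * (Y3.card : ℝ)

lemma wcd_nonneg (Y1 Y2 Y3 : Finset V) : 0 ≤ wcd Y1 Y2 Y3 := by unfold wcd; positivity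

lemma eH_nonneg (H : Finset (Finset V)) (X1 X2 X3 : Finset V) : 0 ≤ eH H X1 X2 X3 :=
  Nat.cast_nonneg _

lemma eH_le_wcd (H : Finset (Finset V)) (X1 X2 X3 : Finset V) :
    eH H X1 X2 X3 ≤ wcd X1 X2 X3 := by
  unfold eH wcd
  have h := Finset.card_filter_le (X1 ×ˢ X2 ×ˢ X3)
    (fun p => ({p.1, p.2.1, p.2.2} : Finset V) ∈ H)
  have h2 : (X1 ×ˢ X2 ×ˢ X3).card = X1.card * (X2.card * X3.card) := by
    rw [Finset.card_product, Finset.card_product]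
  calc ((((X1 ×ˢ X2 ×ˢ X3).filter fun p => ({p.1, p.2.1, p.2.2} : Finset V) ∈ H).card : ℝ))
      ≤ ((X1 ×ˢ X2 ×ˢ X3).card : ℝ) := by exact_mod_cast h
    _ = _ := by rw [h2]; push_cast; ring

lemma eH_eq_sum (H : Finset (Finset V)) (X1 X2 X3 : Finset V) :
    eH H X1 X2 X3 = ∑ x ∈ X1, ∑ y ∈ X2, ∑ z ∈ X3,
      (if ({x, y, z} : Finset V) ∈ H then (1 : ℝ) else 0) := by
  rw [eH, Finset.card_filter]
  push_cast
  rw [Finset.sum_product]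
  exact Finset.sum_congr rfl fun x _ => by rw [Finset.sum_product]

lemma wcd_eq_sum (X1 X2 X3 : Finset V) :
    wcd X1 X2 X3 = ∑ _x ∈ X1, ∑ _y ∈ X2, ∑ _z ∈ X3, (1 : ℝ) := by
  simp [wcd, Finset.sum_const, mul_assoc]

lemma sum_parts {X : Finset V} (A : Finpartition X) (g : V → ℝ) :
    ∑ a ∈ A.parts, ∑ x ∈ a, g x = ∑ x ∈ X, g x := by
  conv_rhs => rw [← A.biUnion_parts]
  rw [Finset.sum_biUnion A.supIndep.pairwiseDisjoint]
  rfl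

lemma sum_parts_filter {X : Finset V} (A : Finpartition X) {X' : Finset V}
    (hX' : X' ⊆ X) (hsp : ∀ a ∈ A.parts, a ⊆ X' ∨ Disjoint a X') (g : V → ℝ) :
    ∑ a ∈ A.parts.filter (· ⊆ X'), ∑ x ∈ a, g x = ∑ x ∈ X', g x := by
  have hbu : (A.parts.filter (· ⊆ X')).biUnion id = X' := by
    apply subset_antisymm
    · intro x hx
      obtain ⟨a, ha, hxa⟩ := Finset.mem_biUnion.1 hx
      exact (Finset.mem_filter.1 ha).2 hxa
    · intro x hx
      obtain ⟨a, ha, hxa⟩ := A.exists_mem (hX' hx)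
      have hss : a ⊆ X' := (hsp a ha).resolve_right fun hd => Finset.disjoint_left.1 hd hxa hx
      exact Finset.mem_biUnion.2 ⟨a, Finset.mem_filter.2 ⟨ha, hss⟩, hxa⟩
  conv_rhs => rw [← hbu]
  rw [Finset.sum_biUnion (A.supIndep.pairwiseDisjoint.subset (by
    intro a ha; exact Finset.mem_coe.2 (Finset.mem_of_mem_filter a (Finset.mem_coe.1 ha))))]
  rfl

lemma sum3_parts_filter {Y1 Y2 Y3 : Finset V}
    (A : Finpartition Y1) (B : Finpartition Y2) (C : Finpartition Y3)
    {X1 X2 X3 : Finset V} (h1 : X1 ⊆ Y1) (h2 : X2 ⊆ Y2) (h3 : X3 ⊆ Y3)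
    (hs1 : ∀ a ∈ A.parts, a ⊆ X1 ∨ Disjoint a X1)
    (hs2 : ∀ b ∈ B.parts, b ⊆ X2 ∨ Disjoint b X2)
    (hs3 : ∀ c ∈ C.parts, c ⊆ X3 ∨ Disjoint c X3)
    (g : V → V → V → ℝ) :
    ∑ a ∈ A.parts.filter (· ⊆ X1), ∑ b ∈ B.parts.filter (· ⊆ X2),
        ∑ c ∈ C.parts.filter (· ⊆ X3), ∑ x ∈ a, ∑ y ∈ b, ∑ z ∈ c, g x y z
      = ∑ x ∈ X1, ∑ y ∈ X2, ∑ z ∈ X3, g x y z := by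
  have step1 : ∀ a b : Finset V,
      ∑ c ∈ C.parts.filter (· ⊆ X3), ∑ x ∈ a, ∑ y ∈ b, ∑ z ∈ c, g x y z
        = ∑ x ∈ a, ∑ y ∈ b, ∑ z ∈ X3, g x y z := by
    intro a b
    rw [Finset.sum_comm]
    refine Finset.sum_congr rfl fun x _ => ?_
    rw [Finset.sum_comm]
    exact Finset.sum_congr rfl fun y _ => sum_parts_filter C h3 hs3 _
  have step2 : ∀ a : Finset V,
      ∑ b ∈ B.parts.filter (· ⊆ X2), ∑ x ∈ a, ∑ y ∈ b, ∑ z ∈ X3, g x y z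
        = ∑ x ∈ a, ∑ y ∈ X2, ∑ z ∈ X3, g x y z := by
    intro a
    rw [Finset.sum_comm]
    exact Finset.sum_congr rfl fun x _ => sum_parts_filter B h2 hs2 _
  calc ∑ a ∈ A.parts.filter (· ⊆ X1), ∑ b ∈ B.parts.filter (· ⊆ X2),
        ∑ c ∈ C.parts.filter (· ⊆ X3), ∑ x ∈ a, ∑ y ∈ b, ∑ z ∈ c, g x y z
      = ∑ a ∈ A.parts.filter (· ⊆ X1), ∑ b ∈ B.parts.filter (· ⊆ X2),
          ∑ x ∈ a, ∑ y ∈ b, ∑ z ∈ X3, g x y z :=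
        Finset.sum_congr rfl fun a _ => Finset.sum_congr rfl fun b _ => step1 a b
    _ = ∑ a ∈ A.parts.filter (· ⊆ X1), ∑ x ∈ a, ∑ y ∈ X2, ∑ z ∈ X3, g x y z :=
        Finset.sum_congr rfl fun a _ => step2 a
    _ = _ := sum_parts_filter A h1 hs1 _

lemma sum3_parts {Y1 Y2 Y3 : Finset V}
    (A : Finpartition Y1) (B : Finpartition Y2) (C : Finpartition Y3)
    (g : V → V → V → ℝ) :
    ∑ a ∈ A.parts, ∑ b ∈ B.parts, ∑ c ∈ C.parts, ∑ x ∈ a, ∑ y ∈ b, ∑ z ∈ c, g x y z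
      = ∑ x ∈ Y1, ∑ y ∈ Y2, ∑ z ∈ Y3, g x y z := by
  have := sum3_parts_filter A B C (subset_refl Y1) (subset_refl Y2) (subset_refl Y3)
    (fun a ha => Or.inl (A.le ha)) (fun b hb => Or.inl (B.le hb))
    (fun c hc => Or.inl (C.le hc)) g
  have hA : A.parts.filter (fun x => x ⊆ Y1) = A.parts :=
    Finset.filter_true_of_mem fun a ha => A.le ha
  have hB : B.parts.filter (fun x => x ⊆ Y2) = B.parts :=
    Finset.filter_true_of_mem fun b hb => B.le hb
  have hC : C.parts.filter (fun x => x ⊆ Y3) = C.parts :=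
    Finset.filter_true_of_mem fun c hc => C.le hc
  rwa [hA, hB, hC] at this

lemma defect_cs {ι : Type} (s t : Finset ι) (hts : t ⊆ s)
    (f g : ι → ℝ) (hg : ∀ i ∈ s, 0 < g i) :
    (∑ i ∈ s, f i) ^ 2 / (∑ i ∈ s, g i)
      + (∑ i ∈ t, f i - (∑ i ∈ s, f i) / (∑ i ∈ s, g i) * ∑ i ∈ t, g i) ^ 2
          / (∑ i ∈ t, g i)
      ≤ ∑ i ∈ s, f i ^ 2 / g i := by
  rcases s.eq_empty_or_nonempty with rfl | hs
  · rw [Finset.subset_empty.1 hts]; simp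
  set W := ∑ i ∈ s, g i with hW
  have hWpos : 0 < W := Finset.sum_pos hg hs
  set d := (∑ i ∈ s, f i) / W with hd
  have key : ∑ i ∈ s, f i ^ 2 / g i
      = (∑ i ∈ s, (f i - d * g i) ^ 2 / g i) + (∑ i ∈ s, f i) ^ 2 / W := by
    have expand : ∀ i ∈ s,
        f i ^ 2 / g i = (f i - d * g i) ^ 2 / g i + (2 * d * f i - d ^ 2 * g i) := by
      intro i hi
      have hgi := (hg i hi).ne'
      field_simp
      ring
    rw [Finset.sum_congr rfl expand, Finset.sum_add_distrib]
    congr 1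
    rw [Finset.sum_sub_distrib, ← Finset.mul_sum, ← Finset.mul_sum]
    rw [hd]
    field_simp
    ring
  rw [key]
  have e1 : ∑ i ∈ t, f i - d * ∑ i ∈ t, g i = ∑ i ∈ t, (f i - d * g i) := by
    rw [Finset.sum_sub_distrib, Finset.mul_sum]
  have h1 : (∑ i ∈ t, f i - d * ∑ i ∈ t, g i) ^ 2 / (∑ i ∈ t, g i)
      ≤ ∑ i ∈ s, (f i - d * g i) ^ 2 / g i := by
    rw [e1]
    calc (∑ i ∈ t, (f i - d * g i)) ^ 2 / (∑ i ∈ t, g i)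
        ≤ ∑ i ∈ t, (f i - d * g i) ^ 2 / g i :=
          Finset.sq_sum_div_le_sum_sq_div t _ (fun i hi => hg i (hts hi))
      _ ≤ ∑ i ∈ s, (f i - d * g i) ^ 2 / g i :=
          Finset.sum_le_sum_of_subset_of_nonneg hts
            (fun i hi _ => div_nonneg (sq_nonneg _) (hg i hi).le)
  linarith


lemma wcd_pos {Y1 Y2 Y3 : Finset V} (h1 : Y1.Nonempty) (h2 : Y2.Nonempty)
    (h3 : Y3.Nonempty) : 0 < wcd Y1 Y2 Y3 := by
  unfold wcd
  have c1 : 0 < Y1.card := Finset.card_pos.2 h1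
  have c2 : 0 < Y2.card := Finset.card_pos.2 h2
  have c3 : 0 < Y3.card := Finset.card_pos.2 h3
  positivity

lemma local_frame (H : Finset (Finset V)) {Y1 Y2 Y3 : Finset V}
    (A : Finpartition Y1) (B : Finpartition Y2) (C : Finpartition Y3)
    {X1 X2 X3 : Finset V} (h1 : X1 ⊆ Y1) (h2 : X2 ⊆ Y2) (h3 : X3 ⊆ Y3)
    (hs1 : ∀ a ∈ A.parts, a ⊆ X1 ∨ Disjoint a X1)
    (hs2 : ∀ b ∈ B.parts, b ⊆ X2 ∨ Disjoint b X2)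
    (hs3 : ∀ c ∈ C.parts, c ⊆ X3 ∨ Disjoint c X3) :
    eH H Y1 Y2 Y3 ^ 2 / wcd Y1 Y2 Y3
      + (eH H X1 X2 X3 - eH H Y1 Y2 Y3 / wcd Y1 Y2 Y3 * wcd X1 X2 X3) ^ 2
          / wcd X1 X2 X3
      ≤ ∑ a ∈ A.parts, ∑ b ∈ B.parts, ∑ c ∈ C.parts, eH H a b c ^ 2 / wcd a b c := by
  set s : Finset (Finset V × Finset V × Finset V) := A.parts ×ˢ B.parts ×ˢ C.parts with hsdef
  set t : Finset (Finset V × Finset V × Finset V) :=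
    s.filter (fun p => p.1 ⊆ X1 ∧ p.2.1 ⊆ X2 ∧ p.2.2 ⊆ X3) with htdef
  set f : Finset V × Finset V × Finset V → ℝ := fun p => eH H p.1 p.2.1 p.2.2 with hfdef
  set g : Finset V × Finset V × Finset V → ℝ := fun p => wcd p.1 p.2.1 p.2.2 with hgdef
  have hts : t ⊆ s := Finset.filter_subset _ _
  have hg : ∀ p ∈ s, 0 < g p := by
    intro p hp
    rw [hsdef, Finset.mem_product, Finset.mem_product] at hp
    exact wcd_pos (A.nonempty_of_mem_parts hp.1) (B.nonempty_of_mem_parts hp.2.1)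
      (C.nonempty_of_mem_parts hp.2.2)
  have hsum_s : ∀ u : Finset V × Finset V × Finset V → ℝ,
      ∑ p ∈ s, u p = ∑ a ∈ A.parts, ∑ b ∈ B.parts, ∑ c ∈ C.parts, u (a, b, c) := by
    intro u
    rw [hsdef, Finset.sum_product]
    exact Finset.sum_congr rfl fun a _ => by rw [Finset.sum_product]
  have hsum_t : ∀ u : Finset V × Finset V × Finset V → ℝ,
      ∑ p ∈ t, u p = ∑ a ∈ A.parts.filter (· ⊆ X1), ∑ b ∈ B.parts.filter (· ⊆ X2),
        ∑ c ∈ C.parts.filter (· ⊆ X3), u (a, b, c) := by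
    intro u
    have : t = (A.parts.filter (· ⊆ X1)) ×ˢ
        ((B.parts.filter (· ⊆ X2)) ×ˢ (C.parts.filter (· ⊆ X3))) := by
      rw [htdef, hsdef, ← Finset.filter_product, ← Finset.filter_product]
    rw [this, Finset.sum_product]
    exact Finset.sum_congr rfl fun a _ => by rw [Finset.sum_product]
  have hfs : ∑ p ∈ s, f p = eH H Y1 Y2 Y3 := by
    rw [hsum_s]
    have : ∀ a b c : Finset V, f (a, b, c) = ∑ x ∈ a, ∑ y ∈ b, ∑ z ∈ c,
        (if ({x, y, z} : Finset V) ∈ H then (1 : ℝ) else 0) :=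
      fun a b c => eH_eq_sum H a b c
    simp only [this]
    rw [sum3_parts A B C, ← eH_eq_sum]
  have hgs : ∑ p ∈ s, g p = wcd Y1 Y2 Y3 := by
    rw [hsum_s]
    have : ∀ a b c : Finset V, g (a, b, c) = ∑ _x ∈ a, ∑ _y ∈ b, ∑ _z ∈ c, (1 : ℝ) :=
      fun a b c => wcd_eq_sum a b c
    simp only [this]
    rw [sum3_parts A B C, ← wcd_eq_sum]
  have hft : ∑ p ∈ t, f p = eH H X1 X2 X3 := by
    rw [hsum_t]
    have : ∀ a b c : Finset V, f (a, b, c) = ∑ x ∈ a, ∑ y ∈ b, ∑ z ∈ c,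
        (if ({x, y, z} : Finset V) ∈ H then (1 : ℝ) else 0) :=
      fun a b c => eH_eq_sum H a b c
    simp only [this]
    rw [sum3_parts_filter A B C h1 h2 h3 hs1 hs2 hs3, ← eH_eq_sum]
  have hgt : ∑ p ∈ t, g p = wcd X1 X2 X3 := by
    rw [hsum_t]
    have : ∀ a b c : Finset V, g (a, b, c) = ∑ _x ∈ a, ∑ _y ∈ b, ∑ _z ∈ c, (1 : ℝ) :=
      fun a b c => wcd_eq_sum a b c
    simp only [this]
    rw [sum3_parts_filter A B C h1 h2 h3 hs1 hs2 hs3, ← wcd_eq_sum]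
  have hmain := defect_cs s t hts f g hg
  rw [hfs, hgs, hft, hgt] at hmain
  calc eH H Y1 Y2 Y3 ^ 2 / wcd Y1 Y2 Y3
        + (eH H X1 X2 X3 - eH H Y1 Y2 Y3 / wcd Y1 Y2 Y3 * wcd X1 X2 X3) ^ 2
          / wcd X1 X2 X3
      ≤ ∑ p ∈ s, f p ^ 2 / g p := hmain
    _ = ∑ a ∈ A.parts, ∑ b ∈ B.parts, ∑ c ∈ C.parts, eH H a b c ^ 2 / wcd a b c := by
        rw [hsum_s]

lemma local_cs (H : Finset (Finset V)) {Y1 Y2 Y3 : Finset V}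
    (A : Finpartition Y1) (B : Finpartition Y2) (C : Finpartition Y3) :
    eH H Y1 Y2 Y3 ^ 2 / wcd Y1 Y2 Y3
      ≤ ∑ a ∈ A.parts, ∑ b ∈ B.parts, ∑ c ∈ C.parts, eH H a b c ^ 2 / wcd a b c := by
  have := local_frame H A B C (subset_refl Y1) (subset_refl Y2) (subset_refl Y3)
    (fun a ha => Or.inl (A.le ha)) (fun b hb => Or.inl (B.le hb))
    (fun c hc => Or.inl (C.le hc))
  have hn : 0 ≤ (eH H Y1 Y2 Y3 - eH H Y1 Y2 Y3 / wcd Y1 Y2 Y3 * wcd Y1 Y2 Y3) ^ 2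
      / wcd Y1 Y2 Y3 := div_nonneg (sq_nonneg _) (wcd_nonneg _ _ _)
  linarith

lemma local_defect (H : Finset (Finset V)) {Y1 Y2 Y3 : Finset V}
    (A : Finpartition Y1) (B : Finpartition Y2) (C : Finpartition Y3)
    {X1 X2 X3 : Finset V} (h1 : X1 ⊆ Y1) (h2 : X2 ⊆ Y2) (h3 : X3 ⊆ Y3)
    (hs1 : ∀ a ∈ A.parts, a ⊆ X1 ∨ Disjoint a X1)
    (hs2 : ∀ b ∈ B.parts, b ⊆ X2 ∨ Disjoint b X2)
    (hs3 : ∀ c ∈ C.parts, c ⊆ X3 ∨ Disjoint c X3)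
    {η : ℝ} (hη : 0 < η)
    (hdev : η * (Y1.card : ℝ) * (Y2.card : ℝ) * (Y3.card : ℝ) <
      |eH H X1 X2 X3 - dH H Y1 Y2 Y3 * (X1.card : ℝ) * (X2.card : ℝ) * (X3.card : ℝ)|) :
    eH H Y1 Y2 Y3 ^ 2 / wcd Y1 Y2 Y3 + η ^ 2 * wcd Y1 Y2 Y3
      ≤ ∑ a ∈ A.parts, ∑ b ∈ B.parts, ∑ c ∈ C.parts, eH H a b c ^ 2 / wcd a b c := by
  have hframe := local_frame H A B C h1 h2 h3 hs1 hs2 hs3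
  set D := eH H X1 X2 X3 - eH H Y1 Y2 Y3 / wcd Y1 Y2 Y3 * wcd X1 X2 X3 with hD
  have habs : η * wcd Y1 Y2 Y3 < |D| := by
    have : eH H X1 X2 X3 - dH H Y1 Y2 Y3 * (X1.card : ℝ) * (X2.card : ℝ) * (X3.card : ℝ)
        = D := by
      rw [hD, dH, wcd, wcd]
      ring
    rw [this] at hdev
    calc η * wcd Y1 Y2 Y3 = η * (Y1.card : ℝ) * (Y2.card : ℝ) * (Y3.card : ℝ) := by
          rw [wcd]; ring
      _ < |D| := hdev
  have hWmono : wcd X1 X2 X3 ≤ wcd Y1 Y2 Y3 := by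
    unfold wcd
    have c1 : (X1.card : ℝ) ≤ Y1.card := Nat.cast_le.2 (Finset.card_le_card h1)
    have c2 : (X2.card : ℝ) ≤ Y2.card := Nat.cast_le.2 (Finset.card_le_card h2)
    have c3 : (X3.card : ℝ) ≤ Y3.card := Nat.cast_le.2 (Finset.card_le_card h3)
    have p1 : (0:ℝ) ≤ X1.card := Nat.cast_nonneg _
    have p2 : (0:ℝ) ≤ X2.card := Nat.cast_nonneg _
    have p3 : (0:ℝ) ≤ X3.card := Nat.cast_nonneg _
    have h12 : (X1.card : ℝ) * X2.card ≤ (Y1.card : ℝ) * Y2.card :=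
      mul_le_mul c1 c2 p2 (p1.trans c1)
    exact mul_le_mul h12 c3 p3 (mul_nonneg (p1.trans c1) (p2.trans c2))
  have heX0 : wcd X1 X2 X3 = 0 → D = 0 := by
    intro h0
    have he : eH H X1 X2 X3 = 0 :=
      le_antisymm (by rw [← h0]; exact eH_le_wcd H X1 X2 X3) (eH_nonneg H X1 X2 X3)
    rw [hD, he, h0, mul_zero, sub_zero]
  have hWY : 0 < wcd Y1 Y2 Y3 := by
    rcases (wcd_nonneg Y1 Y2 Y3).lt_or_eq with h | h
    · exact h
    · exfalso
      have hx0 : wcd X1 X2 X3 = 0 :=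
        le_antisymm (hWmono.trans h.ge) (wcd_nonneg _ _ _)
      have := heX0 hx0
      rw [this, abs_zero, ← h, mul_zero] at habs
      exact lt_irrefl _ habs
  have hWX : 0 < wcd X1 X2 X3 := by
    rcases (wcd_nonneg X1 X2 X3).lt_or_eq with h | h
    · exact h
    · exfalso
      have := heX0 h.symm
      rw [this, abs_zero] at habs
      exact absurd habs (not_lt.2 (by positivity))
  have hDsq : (η * wcd Y1 Y2 Y3) ^ 2 < D ^ 2 := by
    have h2 := pow_lt_pow_left₀ habs (by positivity) (n := 2) two_ne_zero
    rwa [sq_abs] at h2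
  have hfinal : η ^ 2 * wcd Y1 Y2 Y3 ≤ D ^ 2 / wcd X1 X2 X3 := by
    rw [le_div_iff₀ hWX]
    have hstep : η ^ 2 * wcd Y1 Y2 Y3 * wcd X1 X2 X3
        ≤ η ^ 2 * wcd Y1 Y2 Y3 * wcd Y1 Y2 Y3 :=
      mul_le_mul_of_nonneg_left hWmono (by positivity)
    nlinarith [hDsq]
  linarith


lemma atom_splits {Y : Finset V} {F : Finset (Finset V)} {Z : Finset V}
    (hZ : Z ∈ (Finpartition.atomise Y F).parts) {X : Finset V} (hX : X ∈ F) :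
    Z ⊆ X ∨ Disjoint Z X := by
  obtain ⟨hne, Q, hQF, hZeq⟩ := Finpartition.mem_atomise.1 hZ
  by_cases hXQ : X ∈ Q
  · left
    intro i hi
    rw [← hZeq] at hi
    exact ((Finset.mem_filter.1 hi).2 X hX).1 hXQ
  · right
    rw [Finset.disjoint_left]
    intro i hi hiX
    rw [← hZeq] at hi
    exact hXQ (((Finset.mem_filter.1 hi).2 X hX).2 hiX)

variable [Fintype V]

noncomputable def qup (H : Finset (Finset V)) (P : Finpartition (univ : Finset V)) : ℝ :=
  ∑ Y1 ∈ P.parts, ∑ Y2 ∈ P.parts, ∑ Y3 ∈ P.parts, eH H Y1 Y2 Y3 ^ 2 / wcd Y1 Y2 Y3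

def goodP (H : Finset (Finset V)) (η : ℝ) (QV : Finset (Finset V)) : Prop :=
  (1 - η) * ((Fintype.card V : ℝ) ^ 3) ≤
    (((Finset.univ : Finset (V × V × V)).filter fun p =>
      ∀ Y1 ∈ QV, ∀ Y2 ∈ QV, ∀ Y3 ∈ QV,
        p.1 ∈ Y1 → p.2.1 ∈ Y2 → p.2.2 ∈ Y3 → weakQuasi H Y1 Y2 Y3 η).card : ℝ)

lemma qup_nonneg (H : Finset (Finset V)) (P : Finpartition (univ : Finset V)) :
    0 ≤ qup H P :=
  Finset.sum_nonneg fun _ _ => Finset.sum_nonneg fun _ _ => Finset.sum_nonneg fun _ _ =>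
    div_nonneg (sq_nonneg _) (wcd_nonneg _ _ _)

lemma sum_parts_card (P : Finpartition (univ : Finset V)) :
    ∑ Y ∈ P.parts, (Y.card : ℝ) = (Fintype.card V : ℝ) := by
  rw [← Nat.cast_sum, P.sum_card_parts, Finset.card_univ]

lemma qup_le (H : Finset (Finset V)) (P : Finpartition (univ : Finset V)) :
    qup H P ≤ (Fintype.card V : ℝ) ^ 3 := by
  have hterm : ∀ Y1 ∈ P.parts, ∀ Y2 ∈ P.parts, ∀ Y3 ∈ P.parts,
      eH H Y1 Y2 Y3 ^ 2 / wcd Y1 Y2 Y3 ≤ wcd Y1 Y2 Y3 := by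
    intro Y1 h1 Y2 h2 Y3 h3
    have hw : 0 < wcd Y1 Y2 Y3 := wcd_pos (P.nonempty_of_mem_parts h1)
      (P.nonempty_of_mem_parts h2) (P.nonempty_of_mem_parts h3)
    rw [div_le_iff₀ hw]
    have he := eH_le_wcd H Y1 Y2 Y3
    have he0 := eH_nonneg H Y1 Y2 Y3
    nlinarith
  calc qup H P ≤ ∑ Y1 ∈ P.parts, ∑ Y2 ∈ P.parts, ∑ Y3 ∈ P.parts, wcd Y1 Y2 Y3 :=
        Finset.sum_le_sum fun Y1 h1 => Finset.sum_le_sum fun Y2 h2 =>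
          Finset.sum_le_sum fun Y3 h3 => hterm Y1 h1 Y2 h2 Y3 h3
    _ = (Fintype.card V : ℝ) ^ 3 := by
        simp only [wcd, mul_assoc, ← Finset.mul_sum]
        rw [← Finset.sum_mul, sum_parts_card]
        rw [← Finset.sum_mul, sum_parts_card]
        ring

lemma increment (H : Finset (Finset V)) {η : ℝ} (hη : 0 < η)
    (P : Finpartition (univ : Finset V)) (hbad : ¬ goodP H η P.parts) :
    ∃ Q : Finpartition (univ : Finset V),
      Q.parts.card ≤ P.parts.card * 2 ^ (3 * P.parts.card ^ 3) ∧
      qup H P + η ^ 3 * (Fintype.card V : ℝ) ^ 3 ≤ qup H Q := by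
  classical
  set bad : Finset (Finset V × Finset V × Finset V) :=
    (P.parts ×ˢ P.parts ×ˢ P.parts).filter
      (fun Y => ¬ weakQuasi H Y.1 Y.2.1 Y.2.2 η) with hbadset
  have hwit : ∀ Y ∈ bad, ∃ X1 X2 X3 : Finset V, X1 ⊆ Y.1 ∧ X2 ⊆ Y.2.1 ∧ X3 ⊆ Y.2.2 ∧
      η * (Y.1.card : ℝ) * (Y.2.1.card : ℝ) * (Y.2.2.card : ℝ) <
        |eH H X1 X2 X3 -
          dH H Y.1 Y.2.1 Y.2.2 * (X1.card : ℝ) * (X2.card : ℝ) * (X3.card : ℝ)| := by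
    intro Y hY
    have hnw := (Finset.mem_filter.1 hY).2
    unfold weakQuasi at hnw
    push_neg at hnw
    obtain ⟨X1, hX1, X2, hX2, X3, hX3, hlt⟩ := hnw
    exact ⟨X1, X2, X3, hX1, hX2, hX3, hlt⟩
  choose! w1 w2 w3 hw1 hw2 hw3 hdev using hwit
  set F : Finset (Finset V) := bad.biUnion (fun Y => {w1 Y, w2 Y, w3 Y}) with hF
  have hbadcard : bad.card ≤ P.parts.card ^ 3 := by
    calc bad.card ≤ (P.parts ×ˢ P.parts ×ˢ P.parts).card := Finset.card_filter_le _ _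
      _ = P.parts.card ^ 3 := by
          rw [Finset.card_product, Finset.card_product]; ring
  have hFcard : F.card ≤ 3 * P.parts.card ^ 3 := by
    calc F.card ≤ ∑ Y ∈ bad, ({w1 Y, w2 Y, w3 Y} : Finset (Finset V)).card :=
          Finset.card_biUnion_le
      _ ≤ ∑ _Y ∈ bad, 3 := Finset.sum_le_sum fun Y _ => by
          calc ({w1 Y, w2 Y, w3 Y} : Finset (Finset V)).card
              ≤ ({w2 Y, w3 Y} : Finset (Finset V)).card + 1 := Finset.card_insert_le _ _
            _ ≤ (({w3 Y} : Finset (Finset V)).card + 1) + 1 := by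
                exact Nat.add_le_add_right (Finset.card_insert_le _ _) 1
            _ = 3 := by simp
      _ = 3 * bad.card := by rw [Finset.sum_const, smul_eq_mul, mul_comm]
      _ ≤ 3 * P.parts.card ^ 3 := Nat.mul_le_mul_left 3 hbadcard
  set Q : Finpartition (univ : Finset V) :=
    P.bind (fun Y _ => Finpartition.atomise Y F) with hQ
  have hQcard : Q.parts.card ≤ P.parts.card * 2 ^ (3 * P.parts.card ^ 3) := by
    rw [hQ, Finpartition.card_bind]
    calc ∑ A ∈ P.parts.attach, (Finpartition.atomise A.1 F).parts.card
        ≤ ∑ _A ∈ P.parts.attach, 2 ^ F.card :=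
          Finset.sum_le_sum fun A _ => Finpartition.card_atomise_le
      _ = P.parts.card * 2 ^ F.card := by
          rw [Finset.sum_const, Finset.card_attach, smul_eq_mul]
      _ ≤ P.parts.card * 2 ^ (3 * P.parts.card ^ 3) :=
          Nat.mul_le_mul_left _ (Nat.pow_le_pow_right (by norm_num) hFcard)
  refine ⟨Q, hQcard, ?_⟩
  -- decomposition of sums over Q.parts
  have hdecomp : ∀ h : Finset V → ℝ, ∑ Z ∈ Q.parts, h Z
      = ∑ Y ∈ P.parts, ∑ Z ∈ (Finpartition.atomise Y F).parts, h Z := by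
    intro h
    have hdisj : (↑P.parts.attach : Set {x // x ∈ P.parts}).PairwiseDisjoint
        (fun Y => (Finpartition.atomise Y.1 F).parts) := by
      intro Y _ Y' _ hne
      rw [Function.onFun, Finset.disjoint_left]
      intro Z hZ hZ'
      obtain ⟨x, hx⟩ := (Finpartition.atomise Y.1 F).nonempty_of_mem_parts hZ
      exact hne (Subtype.ext (P.eq_of_mem_parts Y.2 Y'.2
        ((Finpartition.atomise Y.1 F).le hZ hx) ((Finpartition.atomise Y'.1 F).le hZ' hx)))
    rw [hQ]
    show ∑ Z ∈ (P.parts.attach.biUnion fun Y => (Finpartition.atomise Y.1 F).parts), h Z = _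
    rw [Finset.sum_biUnion hdisj,
      Finset.sum_attach P.parts (fun Y => ∑ Z ∈ (Finpartition.atomise Y F).parts, h Z)]
  have hqQ : ∑ Y1 ∈ P.parts, ∑ Y2 ∈ P.parts, ∑ Y3 ∈ P.parts,
      (∑ a ∈ (Finpartition.atomise Y1 F).parts, ∑ b ∈ (Finpartition.atomise Y2 F).parts,
        ∑ c ∈ (Finpartition.atomise Y3 F).parts, eH H a b c ^ 2 / wcd a b c)
      = qup H Q := by
    have inner : ∀ a : Finset V,
        ∑ Z2 ∈ Q.parts, ∑ Z3 ∈ Q.parts, eH H a Z2 Z3 ^ 2 / wcd a Z2 Z3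
        = ∑ Y2 ∈ P.parts, ∑ Y3 ∈ P.parts, ∑ b ∈ (Finpartition.atomise Y2 F).parts,
            ∑ c ∈ (Finpartition.atomise Y3 F).parts, eH H a b c ^ 2 / wcd a b c := by
      intro a
      calc ∑ Z2 ∈ Q.parts, ∑ Z3 ∈ Q.parts, eH H a Z2 Z3 ^ 2 / wcd a Z2 Z3
          = ∑ Y2 ∈ P.parts, ∑ b ∈ (Finpartition.atomise Y2 F).parts,
              ∑ Z3 ∈ Q.parts, eH H a b Z3 ^ 2 / wcd a b Z3 := hdecomp _
        _ = ∑ Y2 ∈ P.parts, ∑ b ∈ (Finpartition.atomise Y2 F).parts,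
              ∑ Y3 ∈ P.parts, ∑ c ∈ (Finpartition.atomise Y3 F).parts,
                eH H a b c ^ 2 / wcd a b c :=
            Finset.sum_congr rfl fun Y2 _ => Finset.sum_congr rfl fun b _ => hdecomp _
        _ = _ := Finset.sum_congr rfl fun Y2 _ => Finset.sum_comm
    symm
    calc qup H Q
        = ∑ Y1 ∈ P.parts, ∑ a ∈ (Finpartition.atomise Y1 F).parts,
            ∑ Z2 ∈ Q.parts, ∑ Z3 ∈ Q.parts, eH H a Z2 Z3 ^ 2 / wcd a Z2 Z3 := hdecomp _
      _ = ∑ Y1 ∈ P.parts, ∑ a ∈ (Finpartition.atomise Y1 F).parts,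
            ∑ Y2 ∈ P.parts, ∑ Y3 ∈ P.parts, ∑ b ∈ (Finpartition.atomise Y2 F).parts,
              ∑ c ∈ (Finpartition.atomise Y3 F).parts, eH H a b c ^ 2 / wcd a b c :=
          Finset.sum_congr rfl fun Y1 _ => Finset.sum_congr rfl fun a _ => inner a
      _ = ∑ Y1 ∈ P.parts, ∑ Y2 ∈ P.parts, ∑ a ∈ (Finpartition.atomise Y1 F).parts,
            ∑ Y3 ∈ P.parts, ∑ b ∈ (Finpartition.atomise Y2 F).parts,
              ∑ c ∈ (Finpartition.atomise Y3 F).parts, eH H a b c ^ 2 / wcd a b c :=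
          Finset.sum_congr rfl fun Y1 _ => Finset.sum_comm
      _ = ∑ Y1 ∈ P.parts, ∑ Y2 ∈ P.parts, ∑ Y3 ∈ P.parts,
            ∑ a ∈ (Finpartition.atomise Y1 F).parts,
              ∑ b ∈ (Finpartition.atomise Y2 F).parts,
                ∑ c ∈ (Finpartition.atomise Y3 F).parts, eH H a b c ^ 2 / wcd a b c :=
          Finset.sum_congr rfl fun Y1 _ => Finset.sum_congr rfl fun Y2 _ => Finset.sum_comm
  -- key pointwise bound
  have hkey : ∀ Y1 ∈ P.parts, ∀ Y2 ∈ P.parts, ∀ Y3 ∈ P.parts,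
      eH H Y1 Y2 Y3 ^ 2 / wcd Y1 Y2 Y3
        + (if (Y1, Y2, Y3) ∈ bad then η ^ 2 * wcd Y1 Y2 Y3 else 0)
      ≤ ∑ a ∈ (Finpartition.atomise Y1 F).parts, ∑ b ∈ (Finpartition.atomise Y2 F).parts,
          ∑ c ∈ (Finpartition.atomise Y3 F).parts, eH H a b c ^ 2 / wcd a b c := by
    intro Y1 h1 Y2 h2 Y3 h3
    by_cases hb : (Y1, Y2, Y3) ∈ bad
    · rw [if_pos hb]
      have hmem1 : w1 (Y1, Y2, Y3) ∈ F :=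
        Finset.mem_biUnion.2 ⟨(Y1, Y2, Y3), hb, by simp⟩
      have hmem2 : w2 (Y1, Y2, Y3) ∈ F :=
        Finset.mem_biUnion.2 ⟨(Y1, Y2, Y3), hb, by simp⟩
      have hmem3 : w3 (Y1, Y2, Y3) ∈ F :=
        Finset.mem_biUnion.2 ⟨(Y1, Y2, Y3), hb, by simp⟩
      exact local_defect H (Finpartition.atomise Y1 F) (Finpartition.atomise Y2 F)
        (Finpartition.atomise Y3 F) (hw1 _ hb) (hw2 _ hb) (hw3 _ hb)
        (fun a ha => atom_splits ha hmem1) (fun b hbm => atom_splits hbm hmem2)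
        (fun c hc => atom_splits hc hmem3) hη (hdev _ hb)
    · rw [if_neg hb, add_zero]
      exact local_cs H _ _ _
  -- counting
  have hcnt : η * (Fintype.card V : ℝ) ^ 3 ≤ ∑ Y ∈ bad, wcd Y.1 Y.2.1 Y.2.2 := by
    have hsub : (Finset.univ : Finset (V × V × V)).filter (fun p =>
        ¬ ∀ Y1 ∈ P.parts, ∀ Y2 ∈ P.parts, ∀ Y3 ∈ P.parts,
          p.1 ∈ Y1 → p.2.1 ∈ Y2 → p.2.2 ∈ Y3 → weakQuasi H Y1 Y2 Y3 η) ⊆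
        bad.biUnion fun Y => Y.1 ×ˢ Y.2.1 ×ˢ Y.2.2 := by
      intro p hp
      have hnp := (Finset.mem_filter.1 hp).2
      push_neg at hnp
      obtain ⟨Y1, hY1, Y2, hY2, Y3, hY3, hp1, hp2, hp3, hnw⟩ := hnp
      refine Finset.mem_biUnion.2 ⟨(Y1, Y2, Y3), ?_, ?_⟩
      · exact Finset.mem_filter.2
          ⟨Finset.mem_product.2 ⟨hY1, Finset.mem_product.2 ⟨hY2, hY3⟩⟩, hnw⟩
      · exact Finset.mem_product.2 ⟨hp1, Finset.mem_product.2 ⟨hp2, hp3⟩⟩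
    have hcard1 : (((Finset.univ : Finset (V × V × V)).filter (fun p =>
        ¬ ∀ Y1 ∈ P.parts, ∀ Y2 ∈ P.parts, ∀ Y3 ∈ P.parts,
          p.1 ∈ Y1 → p.2.1 ∈ Y2 → p.2.2 ∈ Y3 → weakQuasi H Y1 Y2 Y3 η)).card : ℝ)
        ≤ ∑ Y ∈ bad, wcd Y.1 Y.2.1 Y.2.2 := by
      have hc2 : ((Finset.univ : Finset (V × V × V)).filter _).card
          ≤ ∑ Y ∈ bad, (Y.1 ×ˢ Y.2.1 ×ˢ Y.2.2).card :=
        le_trans (Finset.card_le_card hsub) Finset.card_biUnion_le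
      calc (((Finset.univ : Finset (V × V × V)).filter _).card : ℝ)
          ≤ ((∑ Y ∈ bad, (Y.1 ×ˢ Y.2.1 ×ˢ Y.2.2).card : ℕ) : ℝ) := Nat.cast_le.2 hc2
        _ = ∑ Y ∈ bad, wcd Y.1 Y.2.1 Y.2.2 := by
            rw [Nat.cast_sum]
            refine Finset.sum_congr rfl fun Y _ => ?_
            rw [Finset.card_product, Finset.card_product, wcd]
            push_cast
            ring
    have hsplitcard := Finset.card_filter_add_card_filter_not
      (s := (Finset.univ : Finset (V × V × V))) (p := fun p =>
        ∀ Y1 ∈ P.parts, ∀ Y2 ∈ P.parts, ∀ Y3 ∈ P.parts,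
          p.1 ∈ Y1 → p.2.1 ∈ Y2 → p.2.2 ∈ Y3 → weakQuasi H Y1 Y2 Y3 η)
    have huniv : (((Finset.univ : Finset (V × V × V)).card : ℕ) : ℝ)
        = (Fintype.card V : ℝ) ^ 3 := by
      rw [Finset.card_univ, Fintype.card_prod, Fintype.card_prod]
      push_cast
      ring
    have hgd : (((Finset.univ : Finset (V × V × V)).filter fun p =>
        ∀ Y1 ∈ P.parts, ∀ Y2 ∈ P.parts, ∀ Y3 ∈ P.parts,
          p.1 ∈ Y1 → p.2.1 ∈ Y2 → p.2.2 ∈ Y3 → weakQuasi H Y1 Y2 Y3 η).card : ℝ)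
        < (1 - η) * ((Fintype.card V : ℝ) ^ 3) := by
      rw [goodP] at hbad
      exact lt_of_not_ge hbad
    have hcast := congrArg (fun n : ℕ => (n : ℝ)) hsplitcard
    push_cast at hcast
    rw [huniv] at hcast
    linarith [hcard1]
  -- conclusion
  have hstep : qup H P + η ^ 2 * ∑ Y ∈ bad, wcd Y.1 Y.2.1 Y.2.2 ≤ qup H Q := by
    rw [← hqQ]
    have hsplit : qup H P + η ^ 2 * ∑ Y ∈ bad, wcd Y.1 Y.2.1 Y.2.2
        = ∑ Y1 ∈ P.parts, ∑ Y2 ∈ P.parts, ∑ Y3 ∈ P.parts,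
            (eH H Y1 Y2 Y3 ^ 2 / wcd Y1 Y2 Y3
              + (if (Y1, Y2, Y3) ∈ bad then η ^ 2 * wcd Y1 Y2 Y3 else 0)) := by
      simp only [Finset.sum_add_distrib]
      rw [qup]
      congr 1
      have hprod : ∑ Y1 ∈ P.parts, ∑ Y2 ∈ P.parts, ∑ Y3 ∈ P.parts,
          (if (Y1, Y2, Y3) ∈ bad then η ^ 2 * wcd Y1 Y2 Y3 else 0)
          = ∑ p ∈ P.parts ×ˢ P.parts ×ˢ P.parts,
              (if p ∈ bad then η ^ 2 * wcd p.1 p.2.1 p.2.2 else 0) := by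
        rw [Finset.sum_product]
        exact Finset.sum_congr rfl fun Y1 _ => by rw [Finset.sum_product]
      rw [hprod, Finset.sum_ite_mem,
        Finset.inter_eq_right.2 (Finset.filter_subset _ _), Finset.mul_sum]
    rw [hsplit]
    exact Finset.sum_le_sum fun Y1 h1 => Finset.sum_le_sum fun Y2 h2 =>
      Finset.sum_le_sum fun Y3 h3 => hkey Y1 h1 Y2 h2 Y3 h3
  have : η ^ 2 * (η * (Fintype.card V : ℝ) ^ 3)
      ≤ η ^ 2 * ∑ Y ∈ bad, wcd Y.1 Y.2.1 Y.2.2 :=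
    mul_le_mul_of_nonneg_left hcnt (sq_nonneg η)
  nlinarith [hstep]



lemma twr_add (a b x : ℕ) : twr (a + b) x = twr a (twr b x) := by
  induction a with
  | zero => simp [twr]
  | succ n ih => rw [Nat.succ_add]; simp only [twr]; rw [ih]

lemma le_twr : ∀ (n x : ℕ), x ≤ twr n x
  | 0, x => le_refl x
  | n + 1, x => (le_twr n x).trans (Nat.le_of_lt Nat.lt_two_pow_self)

lemma tower_mono {m n : ℕ} (h : m ≤ n) : tower m ≤ tower n := by
  have : n = (n - m) + m := by omega
  rw [tower, tower, this, twr_add]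
  exact le_twr _ _

lemma one_le_tower (n : ℕ) : 1 ≤ tower n := le_twr n 1

lemma g_le_twr (k : ℕ) : k * 2 ^ (3 * k ^ 3) ≤ twr 5 k := by
  have h0 : k + 1 ≤ 2 ^ k := Nat.lt_two_pow_self (n := k)
  have hA : k * 2 ^ (3 * k ^ 3) ≤ 2 ^ (4 * k ^ 3) := by
    calc k * 2 ^ (3 * k ^ 3) ≤ 2 ^ k * 2 ^ (3 * k ^ 3) :=
          Nat.mul_le_mul_right _ (by omega)
      _ = 2 ^ (k + 3 * k ^ 3) := (pow_add 2 k (3 * k ^ 3)).symm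
      _ ≤ 2 ^ (4 * k ^ 3) := by
          apply Nat.pow_le_pow_right (by norm_num)
          have hk : k ≤ k ^ 3 := Nat.le_self_pow (by norm_num) k
          omega
  have hk3 : k ^ 3 ≤ 2 ^ (3 * k) := by
    calc k ^ 3 ≤ (2 ^ k) ^ 3 := Nat.pow_le_pow_left (by omega) 3
      _ = 2 ^ (3 * k) := by rw [← pow_mul, Nat.mul_comm]
  have hB : 4 * k ^ 3 ≤ 2 ^ (3 * k + 2) := by
    calc 4 * k ^ 3 ≤ 4 * 2 ^ (3 * k) := by omega
      _ = 2 ^ (3 * k + 2) := by rw [pow_add]; ring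
  have hC : 3 * k + 2 ≤ 2 ^ (k + 2) := by
    calc 3 * k + 2 ≤ 4 * (k + 1) := by omega
      _ ≤ 4 * 2 ^ k := by omega
      _ = 2 ^ (k + 2) := by rw [pow_add]; ring
  have hD : k + 2 ≤ 2 ^ (2 ^ k) := by
    have h1 : 2 ^ (k + 1) ≤ 2 ^ (2 ^ k) := Nat.pow_le_pow_right (by norm_num) h0
    have h2 : 2 * (k + 1) ≤ 2 ^ (k + 1) := by rw [pow_succ, Nat.mul_comm]; omega
    omega
  have hfin : twr 5 k = 2 ^ (2 ^ (2 ^ (2 ^ (2 ^ k)))) := rfl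
  rw [hfin]
  calc k * 2 ^ (3 * k ^ 3) ≤ 2 ^ (4 * k ^ 3) := hA
    _ ≤ 2 ^ (2 ^ (3 * k + 2)) := Nat.pow_le_pow_right (by norm_num) hB
    _ ≤ 2 ^ (2 ^ (2 ^ (k + 2))) :=
        Nat.pow_le_pow_right (by norm_num)
          (Nat.pow_le_pow_right (by norm_num) hC)
    _ ≤ 2 ^ (2 ^ (2 ^ (2 ^ (2 ^ k)))) :=
        Nat.pow_le_pow_right (by norm_num)
          (Nat.pow_le_pow_right (by norm_num)
            (Nat.pow_le_pow_right (by norm_num) hD))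

variable {V : Type} [DecidableEq V] [Fintype V]

lemma iterate_main (H : Finset (Finset V)) {η : ℝ} (hη : 0 < η)
    (hne : (Finset.univ : Finset V).Nonempty) (s : ℕ) :
    ∃ P : Finpartition (Finset.univ : Finset V),
      P.parts.card ≤ tower (5 * s) ∧
      (goodP H η P.parts ∨
        (s : ℝ) * (η ^ 3 * (Fintype.card V : ℝ) ^ 3) ≤ qup H P) := by
  induction s with
  | zero =>
    refine ⟨Finpartition.indiscrete (by simpa [Finset.bot_eq_empty] using hne.ne_empty), ?_,
      Or.inr ?_⟩
    · simp [Finpartition.indiscrete_parts, tower, twr]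
    · simpa using qup_nonneg H _
  | succ s ih =>
    obtain ⟨P, hcard, hq⟩ := ih
    by_cases hg : goodP H η P.parts
    · exact ⟨P, hcard.trans (tower_mono (by omega)), Or.inl hg⟩
    · have hqP := hq.resolve_left hg
      obtain ⟨Q, hQc, hQq⟩ := increment H hη P hg
      refine ⟨Q, ?_, Or.inr ?_⟩
      · calc Q.parts.card ≤ P.parts.card * 2 ^ (3 * P.parts.card ^ 3) := hQc
          _ ≤ tower (5 * s) * 2 ^ (3 * tower (5 * s) ^ 3) :=
              Nat.mul_le_mul hcard (Nat.pow_le_pow_right (by norm_num)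
                (Nat.mul_le_mul_left 3 (Nat.pow_le_pow_left hcard 3)))
          _ ≤ twr 5 (tower (5 * s)) := g_le_twr _
          _ = tower (5 * (s + 1)) := by
              rw [tower, tower, ← twr_add]
              congr 1
              omega
      · have hc : ((s + 1 : ℕ) : ℝ) * (η ^ 3 * (Fintype.card V : ℝ) ^ 3)
            = (s : ℝ) * (η ^ 3 * (Fintype.card V : ℝ) ^ 3)
              + η ^ 3 * (Fintype.card V : ℝ) ^ 3 := by push_cast; ring
        rw [hc]
        linarith

lemma weakQuasi_univ (H : Finset (Finset V)) {η : ℝ} (hη : 1 / 2 ≤ η) :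
    weakQuasi H (Finset.univ : Finset V) Finset.univ Finset.univ η := by
  intro X1 _ X2 _ X3 _
  set N : ℝ := ((Finset.univ : Finset V).card : ℝ) * ((Finset.univ : Finset V).card : ℝ)
    * ((Finset.univ : Finset V).card : ℝ) with hN
  set E : ℝ := eH H Finset.univ Finset.univ Finset.univ with hE
  set p : ℝ := (X1.card : ℝ) * (X2.card : ℝ) * (X3.card : ℝ) with hp
  set e : ℝ := eH H X1 X2 X3 with he
  have hNw : N = wcd (Finset.univ : Finset V) Finset.univ Finset.univ := by rw [hN, wcd]
  have hpw : p = wcd X1 X2 X3 := by rw [hp, wcd]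
  have hsub : ∀ Z1 Z2 Z3 : Finset V, (Z1 ×ˢ Z2 ×ˢ Z3 : Finset (V × V × V))
      ⊆ Finset.univ ×ˢ Finset.univ ×ˢ Finset.univ := fun _ _ _ => Finset.subset_univ _
  have hEe : e ≤ E := by
    rw [he, hE, eH, eH]
    exact_mod_cast Finset.card_le_card
      (Finset.filter_subset_filter _ (hsub X1 X2 X3))
  have hep : e ≤ p := by rw [hpw]; exact eH_le_wcd H X1 X2 X3
  have he0 : 0 ≤ e := eH_nonneg H X1 X2 X3
  have hE0 : 0 ≤ E := eH_nonneg H _ _ _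
  have hEN : E ≤ N := by rw [hNw]; exact eH_le_wcd H _ _ _
  have hpN : p ≤ N := by
    rw [hpw, hNw]
    unfold wcd
    have c1 : (X1.card : ℝ) ≤ ((Finset.univ : Finset V).card : ℝ) :=
      Nat.cast_le.2 (Finset.card_le_card (Finset.subset_univ _))
    have c2 : (X2.card : ℝ) ≤ ((Finset.univ : Finset V).card : ℝ) :=
      Nat.cast_le.2 (Finset.card_le_card (Finset.subset_univ _))
    have c3 : (X3.card : ℝ) ≤ ((Finset.univ : Finset V).card : ℝ) :=
      Nat.cast_le.2 (Finset.card_le_card (Finset.subset_univ _))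
    have p1 : (0:ℝ) ≤ X1.card := Nat.cast_nonneg _
    have p2 : (0:ℝ) ≤ X2.card := Nat.cast_nonneg _
    have p3 : (0:ℝ) ≤ X3.card := Nat.cast_nonneg _
    have h12 : (X1.card : ℝ) * X2.card ≤ ((Finset.univ : Finset V).card : ℝ)
        * ((Finset.univ : Finset V).card : ℝ) := mul_le_mul c1 c2 p2 (p1.trans c1)
    exact mul_le_mul h12 c3 p3 (mul_nonneg (p1.trans c1) (p2.trans c2))
  have hp0 : 0 ≤ p := by rw [hpw]; exact wcd_nonneg _ _ _
  have hN0 : 0 ≤ N := le_trans hp0 hpN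
  -- complement counting : p - e ≤ N - E
  have hcompl : p - e ≤ N - E := by
    have key : ∀ Z1 Z2 Z3 : Finset V,
        ((Z1 ×ˢ Z2 ×ˢ Z3).filter
          (fun q : V × V × V => ({q.1, q.2.1, q.2.2} : Finset V) ∈ H)).card
          + ((Z1 ×ˢ Z2 ×ˢ Z3).filter
            (fun q : V × V × V => ¬ ({q.1, q.2.1, q.2.2} : Finset V) ∈ H)).card
          = Z1.card * Z2.card * Z3.card := by
      intro Z1 Z2 Z3
      have h := Finset.card_filter_add_card_filter_not
        (s := Z1 ×ˢ Z2 ×ˢ Z3)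
        (p := fun q : V × V × V => ({q.1, q.2.1, q.2.2} : Finset V) ∈ H)
      rw [Finset.card_product, Finset.card_product] at h
      rw [h]; ring
    have hmono : ((X1 ×ˢ X2 ×ˢ X3).filter
        (fun q : V × V × V => ¬ ({q.1, q.2.1, q.2.2} : Finset V) ∈ H)).card
        ≤ (((Finset.univ : Finset V) ×ˢ Finset.univ ×ˢ Finset.univ).filter
          (fun q : V × V × V => ¬ ({q.1, q.2.1, q.2.2} : Finset V) ∈ H)).card :=
      Finset.card_le_card (Finset.filter_subset_filter _ (hsub X1 X2 X3))
    have k1 := key X1 X2 X3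
    have k2 := key Finset.univ Finset.univ Finset.univ
    have hpcast : p = ((X1.card * X2.card * X3.card : ℕ) : ℝ) := by
      rw [hp]; push_cast; ring
    have hNcast : N = (((Finset.univ : Finset V).card * (Finset.univ : Finset V).card
        * (Finset.univ : Finset V).card : ℕ) : ℝ) := by rw [hN]; push_cast; ring
    have k1' := congrArg (fun n : ℕ => (n : ℝ)) k1
    have k2' := congrArg (fun n : ℕ => (n : ℝ)) k2
    push_cast at k1' k2'
    have hm' := (Nat.cast_le (α := ℝ)).2 hmono
    push_cast at hm'
    rw [hpcast, hNcast]
    push_cast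
    rw [he, hE] at *
    unfold eH at *
    linarith [k1', k2', hm']
  rw [abs_le]
  have hdH : dH H (Finset.univ : Finset V) Finset.univ Finset.univ * (X1.card : ℝ)
      * (X2.card : ℝ) * (X3.card : ℝ) = E / N * p := by
    rw [dH, ← hE, ← hN, hp]; ring
  rw [hdH]
  have hscale : η * ((Finset.univ : Finset V).card : ℝ)
      * ((Finset.univ : Finset V).card : ℝ)
      * ((Finset.univ : Finset V).card : ℝ) = η * N := by rw [hN]; ring
  rw [hscale]
  rcases eq_or_lt_of_le hN0 with hNz | hNpos
  · have hpz : p = 0 := le_antisymm (hNz ▸ hpN) hp0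
    have hez : e = 0 := le_antisymm (hpz ▸ hep) he0
    have hg0 : e - E / N * p = 0 := by rw [hez, hpz]; ring
    rw [hg0, ← hNz, mul_zero]
    norm_num
  · have hd0 : 0 ≤ E / N := div_nonneg hE0 hN0
    have hd1 : E / N ≤ 1 := by rw [div_le_one hNpos]; exact hEN
    have hdN : E / N * N = E := by field_simp
    by_cases hcase : E / N ≤ η
    · have hEηN : E ≤ η * N := by
        calc E = E / N * N := hdN.symm
          _ ≤ η * N := mul_le_mul_of_nonneg_right hcase hN0
      have hdp1 : E / N * p ≤ E := by
        calc E / N * p ≤ E / N * N := mul_le_mul_of_nonneg_left hpN hd0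
          _ = E := hdN
      have hdp0 : 0 ≤ E / N * p := mul_nonneg hd0 hp0
      constructor
      · linarith
      · linarith [hEe]
    · push_neg at hcase
      have hd1' : 1 - E / N ≤ 1 - η := by linarith
      have h1mdnn : 0 ≤ 1 - E / N := by linarith
      have hhalf : 1 - η ≤ η := by linarith
      have h3 : (1 - E / N) * N ≤ (1 - η) * N := mul_le_mul_of_nonneg_right hd1' hN0
      have h4 : (1 - η) * N ≤ η * N := mul_le_mul_of_nonneg_right hhalf hN0
      constructor
      · have key2 : E / N * p - e ≤ (1 - E / N) * N := by
          nlinarith [hcompl, hdN, mul_nonneg h1mdnn hp0]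
        linarith
      · have key3 : e - E / N * p ≤ (1 - E / N) * p := by nlinarith [hep]
        have key4 : (1 - E / N) * p ≤ (1 - E / N) * N :=
          mul_le_mul_of_nonneg_left hpN h1mdnn
        linarith

end CWR

/-- Chung's weak regularity lemma for 3-graphs, with tower-type bounds. -/
theorem chung_weak_regularity :
    ∃ c : ℕ, 0 < c ∧ ∀ η : ℝ, 0 < η →
      ∃ K : ℕ, K ≤ tower ⌈η⁻¹ ^ c⌉₊ ∧
        ∀ (V : Type) [Fintype V] [DecidableEq V] (H : Finset (Finset V)), Is3Graph H →
          ∃ QV : Finset (Finset V), IsVertexPartition QV Finset.univ ∧ QV.card ≤ K ∧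
            (1 - η) * ((Fintype.card V : ℝ) ^ 3) ≤
              (((Finset.univ : Finset (V × V × V)).filter fun p =>
                ∀ Y1 ∈ QV, ∀ Y2 ∈ QV, ∀ Y3 ∈ QV,
                  p.1 ∈ Y1 → p.2.1 ∈ Y2 → p.2.2 ∈ Y3 →
                    weakQuasi H Y1 Y2 Y3 η).card : ℝ) := by
  refine ⟨6, by norm_num, ?_⟩
  intro η hη
  by_cases hsmall : η < 1 / 2
  · set s : ℕ := ⌊η⁻¹ ^ 3⌋₊ + 1 with hs
    refine ⟨tower (5 * s), CWR.tower_mono ?_, ?_⟩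
    · have hx : (0 : ℝ) < η⁻¹ := by positivity
      have h2 : (2 : ℝ) ≤ η⁻¹ := by
        rw [show (2 : ℝ) = (1 / 2)⁻¹ by norm_num]
        exact inv_anti₀ hη hsmall.le
      have hfl : (⌊η⁻¹ ^ 3⌋₊ : ℝ) ≤ η⁻¹ ^ 3 := Nat.floor_le (by positivity)
      have h8 : (8 : ℝ) ≤ η⁻¹ ^ 3 := by
        calc (8 : ℝ) = 2 ^ 3 := by norm_num
          _ ≤ η⁻¹ ^ 3 := pow_le_pow_left₀ (by norm_num) h2 3
      have hkey : ((5 * s : ℕ) : ℝ) ≤ η⁻¹ ^ 6 := by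
        have h6 : η⁻¹ ^ 6 = η⁻¹ ^ 3 * η⁻¹ ^ 3 := by ring
        push_cast [hs]
        nlinarith
      calc 5 * s = ⌈((5 * s : ℕ) : ℝ)⌉₊ := (Nat.ceil_natCast _).symm
        _ ≤ ⌈η⁻¹ ^ 6⌉₊ := Nat.ceil_mono hkey
    · intro V _ _ H _
      rcases (Finset.univ : Finset V).eq_empty_or_nonempty with hVe | hVne
      · refine ⟨∅, ⟨fun Y hY => absurd hY (Finset.notMem_empty Y),
          fun x hx => absurd (hVe ▸ hx) (Finset.notMem_empty x)⟩, by simp, ?_⟩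
        have hc0 : Fintype.card V = 0 := by
          rw [← Finset.card_univ, hVe, Finset.card_empty]
        rw [hc0]
        push_cast
        norm_num
        positivity
      · obtain ⟨P, hcard, hdisj⟩ := CWR.iterate_main H hη hVne s
        have hgood : CWR.goodP H η P.parts := by
          rcases hdisj with hg | hq
          · exact hg
          · exfalso
            have hn1 : (1 : ℝ) ≤ (Fintype.card V : ℝ) := by
              obtain ⟨v, _⟩ := hVne
              haveI : Nonempty V := ⟨v⟩
              exact Nat.one_le_cast.2 Fintype.card_pos
            have hq3 := CWR.qup_le H P
            have hlt : η⁻¹ ^ 3 < (s : ℝ) := by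
              rw [hs]; push_cast; exact Nat.lt_floor_add_one _
            have hη3 : (0 : ℝ) < η ^ 3 := by positivity
            have hsη : 1 < (s : ℝ) * η ^ 3 := by
              have h1 : η⁻¹ ^ 3 * η ^ 3 = 1 := by field_simp
              calc (1 : ℝ) = η⁻¹ ^ 3 * η ^ 3 := h1.symm
                _ < s * η ^ 3 := mul_lt_mul_of_pos_right hlt hη3
            have hn3 : (1 : ℝ) ≤ (Fintype.card V : ℝ) ^ 3 := by
              calc (1 : ℝ) = 1 ^ 3 := by norm_num
                _ ≤ (Fintype.card V : ℝ) ^ 3 := pow_le_pow_left₀ (by norm_num) hn1 3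
            nlinarith
        exact ⟨P.parts, ⟨fun Y hY => P.le hY, fun x hx => P.existsUnique_mem hx⟩,
          hcard, hgood⟩
  · push_neg at hsmall
    refine ⟨1, CWR.one_le_tower _, ?_⟩
    intro V _ _ H _
    refine ⟨{Finset.univ}, ⟨fun Y _ => Finset.subset_univ Y,
      fun x _ => ⟨Finset.univ, ⟨Finset.mem_singleton_self _, Finset.mem_univ x⟩,
        fun Y hY => Finset.mem_singleton.1 hY.1⟩⟩, by simp, ?_⟩
    have hall : ∀ p ∈ (Finset.univ : Finset (V × V × V)),
        (∀ Y1 ∈ ({Finset.univ} : Finset (Finset V)),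
          ∀ Y2 ∈ ({Finset.univ} : Finset (Finset V)),
          ∀ Y3 ∈ ({Finset.univ} : Finset (Finset V)),
          p.1 ∈ Y1 → p.2.1 ∈ Y2 → p.2.2 ∈ Y3 → weakQuasi H Y1 Y2 Y3 η) := by
      intro p _ Y1 hY1 Y2 hY2 Y3 hY3 _ _ _
      rw [Finset.mem_singleton.1 hY1, Finset.mem_singleton.1 hY2,
        Finset.mem_singleton.1 hY3]
      exact CWR.weakQuasi_univ H hsmall
    rw [Finset.filter_true_of_mem hall]
    have huniv : ((Finset.univ : Finset (V × V × V)).card : ℝ)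
        = (Fintype.card V : ℝ) ^ 3 := by
      rw [Finset.card_univ, Fintype.card_prod, Fintype.card_prod]
      push_cast
      ring
    rw [huniv]
    nlinarith [pow_nonneg (Nat.cast_nonneg (Fintype.card V) : (0 : ℝ) ≤ _) 3]
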